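/- Let s, t be nonnegative integers, n a positive integer, and w ≥ 0. Then there exist nonnegative reals w_1, ..., w_s with w_1 + ... + w_s ≤ w such that β*_{w,n}(P_{(s,t)}) ≤ β*_{w',n−s}(P_{(0,t)}) · ∏_{i=1}^{s} w_i, where w' = w − ∑_{i=1}^{s} w_i. -/

import Mathlib

open Finset
open scoped Classical

/-- A (bounded, nonnegative) measure on the edges of the complete graph `K_n`,
given by a symmetric nonnegative weight function vanishing on the diagonal. -/
structure EdgeMeasure (n : ℕ) where
  w : Fin n → Fin n → ℝ
  symm : ∀ i j, w i j = w j i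
  diag : ∀ i, w i i = 0
  nonneg : ∀ i j, 0 ≤ w i j

/-- Total mass of an edge measure (each unordered edge counted once). -/
noncomputable def mass {n : ℕ} (μ : EdgeMeasure n) : ℝ :=
  (∑ i, ∑ j, μ.w i j) / 2

/-- Weighted degree `μ̄(v)` of a vertex. -/
noncomputable def mubar {n : ℕ} (μ : EdgeMeasure n) (v : Fin n) : ℝ :=
  ∑ u, μ.w v u

/-- The μ-weight of the path traced by a tuple of `m` vertices:
the product of the weights of its `m-1` consecutive edges. -/
noncomputable def pathWt {n m : ℕ} (μ : EdgeMeasure n) (x : Fin m → Fin n) : ℝ :=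
  ∏ i : Fin (m - 1),
    μ.w (x ⟨i.1, by have := i.2; omega⟩) (x ⟨i.1 + 1, by have := i.2; omega⟩)

/-- `β(μ; P_m)`: total μ-weight of the (unlabeled, non-induced) copies of the path
on `m` vertices in `K_n`; each unlabeled copy corresponds to exactly two injective
labeled tuples, whence the division by 2. -/
noncomputable def betaP {n : ℕ} (μ : EdgeMeasure n) (m : ℕ) : ℝ :=
  (∑ x ∈ univ.filter (fun x : Fin m → Fin n => Function.Injective x), pathWt μ x) / 2

/-- `β(P_m)`: the supremum of `β(μ; P_m)` over all `n` and all probability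
measures `μ` on the edges of `K_n`. -/
noncomputable def betaPathSup (m : ℕ) : ℝ :=
  sSup {r : ℝ | ∃ n : ℕ, ∃ μ : EdgeMeasure n, mass μ = 1 ∧ r = betaP μ m}

/-- `β*(μ; P_{(s,t)})` with the path of length `s` starting at vertex `vs` and the
path of length `t` starting at vertex `vt`: each copy of the disjoint union
`P_{s+1} ⊔ P_{t+1}` is recorded by a jointly injective pair of tuples. -/
noncomputable def betaStar {n : ℕ} (μ : EdgeMeasure n) (s t : ℕ) (vs vt : Fin n) : ℝ :=
  ∑ p ∈ univ.filter
      (fun p : (Fin (s + 1) → Fin n) × (Fin (t + 1) → Fin n) =>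
        Function.Injective (Sum.elim p.1 p.2) ∧ p.1 0 = vs ∧ p.2 0 = vt),
    pathWt μ p.1 * pathWt μ p.2

/-- `β*_{w,n}(P_{(s,t)})`: the supremum of `β*(μ; P_{(s,t)})` over all measures of
total mass `w` on the edges of `K_n`, the length-`s` path starting at vertex `n`
(index `n-1`) and the length-`t` path starting at vertex `1` (index `0`). -/
noncomputable def betaStarSupN (w : ℝ) (n s t : ℕ) : ℝ :=
  sSup {r : ℝ | ∃ μ : EdgeMeasure n, mass μ = w ∧
    ∃ h : 0 < n, r = betaStar μ s t ⟨n - 1, by omega⟩ ⟨0, h⟩}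

/-- `ρ(μ; m) = ∑_{x ∈ (n)_m} μ̄(x_1) (∏ μ(x_i,x_{i+1})) μ̄(x_m)`, the sum over
ordered tuples of `m` distinct vertices. -/
noncomputable def rho {n : ℕ} (μ : EdgeMeasure n) (m : ℕ) : ℝ :=
  if h : 0 < m then
    ∑ x ∈ univ.filter (fun x : Fin m → Fin n => Function.Injective x),
      mubar μ (x ⟨0, h⟩) * pathWt μ x * mubar μ (x ⟨m - 1, by omega⟩)
  else 0

/-- `ρ_n(m)`: supremum of `ρ(μ; m)` over probability measures on the edges of `K_n`. -/
noncomputable def rhoN (n m : ℕ) : ℝ :=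
  sSup {r : ℝ | ∃ μ : EdgeMeasure n, mass μ = 1 ∧ r = rho μ m}

/-- `ρ(m) = sup_n ρ_n(m)`. -/
noncomputable def rhoSup (m : ℕ) : ℝ :=
  sSup {r : ℝ | ∃ n : ℕ, r = rhoN n m}

/-- `μ` is the uniform probability measure on the edges of the cycle `C_m` on the
vertices `0, 1, …, m-1` of `K_n`: each cycle edge gets weight `1/m`. -/
def CycleUniform {n : ℕ} (μ : EdgeMeasure n) (m : ℕ) : Prop :=
  ∀ a b : Fin n, μ.w a b =
    (if a.1 < m ∧ b.1 < m ∧ b.1 = (a.1 + 1) % m then (1 : ℝ) / m else 0) +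
    (if a.1 < m ∧ b.1 < m ∧ a.1 = (b.1 + 1) % m then (1 : ℝ) / m else 0)

/-- `deg_P(v)`: the number of edges of the path traced by the tuple `p` that are
incident to the vertex `v`. -/
noncomputable def degTuple {n m : ℕ} (p : Fin m → Fin n) (v : Fin n) : ℕ :=
  ((univ : Finset (Fin (m - 1))).filter (fun i =>
      p ⟨i.1, by have := i.2; omega⟩ = v ∨ p ⟨i.1 + 1, by have := i.2; omega⟩ = v)).card

lemma amgm (k : ℕ) (x w : ℝ) (h0 : 0 ≤ x) (hxw : x ≤ w) :
    x * (w - x) ^ k ≤ (w / (k + 1)) * (w - w / (k + 1)) ^ k := by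
  rcases Nat.eq_zero_or_pos k with hk | hk
  · subst hk; simp; linarith
  have hkR : (0:ℝ) < k := by exact_mod_cast hk
  have hc : (0:ℝ) < (k:ℝ) + 1 := by linarith
  have hwx : 0 ≤ w - x := by linarith
  have hw : 0 ≤ w := le_trans h0 hxw
  have h1 : ((k:ℝ)*x) ^ ((1:ℝ)/((k:ℝ)+1)) * (w-x) ^ ((k:ℝ)/((k:ℝ)+1)) ≤
      (k:ℝ)*w/((k:ℝ)+1) := by
    have := Real.geom_mean_le_arith_mean2_weighted
      (by positivity : (0:ℝ) ≤ 1/((k:ℝ)+1)) (by positivity : (0:ℝ) ≤ (k:ℝ)/((k:ℝ)+1))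
      (by positivity : (0:ℝ) ≤ (k:ℝ)*x) hwx (by field_simp; ring)
    calc ((k:ℝ)*x) ^ ((1:ℝ)/((k:ℝ)+1)) * (w-x) ^ ((k:ℝ)/((k:ℝ)+1)) ≤
        1/((k:ℝ)+1) * ((k:ℝ)*x) + (k:ℝ)/((k:ℝ)+1) * (w-x) := this
      _ = (k:ℝ)*w/((k:ℝ)+1) := by field_simp; ring
  have hbase : 0 ≤ ((k:ℝ)*x) ^ ((1:ℝ)/((k:ℝ)+1)) * (w-x) ^ ((k:ℝ)/((k:ℝ)+1)) := by
    positivity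
  have h2 := Real.rpow_le_rpow hbase h1 (le_of_lt hc)
  have e1 : (((k:ℝ)*x) ^ ((1:ℝ)/((k:ℝ)+1))) ^ ((k:ℝ)+1) = (k:ℝ)*x := by
    rw [← Real.rpow_mul (by positivity), div_mul_cancel₀ _ hc.ne', Real.rpow_one]
  have e2 : ((w-x) ^ ((k:ℝ)/((k:ℝ)+1))) ^ ((k:ℝ)+1) = (w-x)^k := by
    rw [← Real.rpow_mul hwx, div_mul_cancel₀ _ hc.ne', Real.rpow_natCast]
  rw [Real.mul_rpow (by positivity) (by positivity), e1, e2] at h2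
  -- h2 : k*x*(w-x)^k ≤ (k*w/(k+1))^(k+1)
  have e3 : ((k:ℝ)*w/((k:ℝ)+1)) ^ (((k:ℝ))+1) = ((k:ℝ)*w/((k:ℝ)+1)) ^ (k+1) := by
    rw [← Real.rpow_natCast ((k:ℝ)*w/((k:ℝ)+1)) (k+1)]
    push_cast
    ring_nf
  rw [e3] at h2
  have e4 : ((k:ℝ)*w/((k:ℝ)+1)) ^ (k+1) = (k:ℝ) * ((w / (k + 1)) * (w - w / (k + 1)) ^ k) := by
    have : w - w/((k:ℝ)+1) = (k:ℝ)*w/((k:ℝ)+1) := by field_simp; ring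
    rw [this, pow_succ, mul_comm (((k:ℝ)*w/((k:ℝ)+1)) ^ k) _]
    field_simp
  rw [e4] at h2
  rw [mul_assoc] at h2
  exact le_of_mul_le_mul_left h2 hkR

lemma pathWt_nonneg {n m : ℕ} (μ : EdgeMeasure n) (x : Fin m → Fin n) : 0 ≤ pathWt μ x :=
  Finset.prod_nonneg fun _ _ => μ.nonneg _ _

lemma betaStar_nonneg {n : ℕ} (μ : EdgeMeasure n) (s t : ℕ) (vs vt : Fin n) :
    0 ≤ betaStar μ s t vs vt :=
  Finset.sum_nonneg fun _ _ => mul_nonneg (pathWt_nonneg _ _) (pathWt_nonneg _ _)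

lemma mass_nonneg {n : ℕ} (μ : EdgeMeasure n) : 0 ≤ mass μ := by
  apply div_nonneg _ (by norm_num)
  exact Finset.sum_nonneg fun _ _ => Finset.sum_nonneg fun _ _ => μ.nonneg _ _

lemma edge_le_two_mass {n : ℕ} (μ : EdgeMeasure n) (i j : Fin n) :
    μ.w i j ≤ 2 * mass μ := by
  have h1 : μ.w i j ≤ ∑ b, μ.w i b :=
    Finset.single_le_sum (fun b _ => μ.nonneg i b) (mem_univ j)
  have h2 : (∑ b, μ.w i b) ≤ ∑ a, ∑ b, μ.w a b :=
    Finset.single_le_sum (fun a _ => Finset.sum_nonneg fun b _ => μ.nonneg a b) (mem_univ i)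
  unfold mass; linarith

lemma pathWt_le {n m : ℕ} (μ : EdgeMeasure n) (x : Fin m → Fin n) :
    pathWt μ x ≤ (2 * mass μ) ^ (m - 1) := by
  calc pathWt μ x ≤ ∏ _i : Fin (m-1), (2 * mass μ) :=
        Finset.prod_le_prod (fun _ _ => μ.nonneg _ _) (fun _ _ => edge_le_two_mass μ _ _)
    _ = (2 * mass μ) ^ (m - 1) := by simp

lemma betaStar_le_bound {n : ℕ} (μ : EdgeMeasure n) (s t : ℕ) (vs vt : Fin n) :
    betaStar μ s t vs vt ≤
      (Fintype.card ((Fin (s+1) → Fin n) × (Fin (t+1) → Fin n))) *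
        ((2 * mass μ) ^ s * (2 * mass μ) ^ t) := by
  have hb : ∀ p ∈ univ.filter
      (fun p : (Fin (s + 1) → Fin n) × (Fin (t + 1) → Fin n) =>
        Function.Injective (Sum.elim p.1 p.2) ∧ p.1 0 = vs ∧ p.2 0 = vt),
      pathWt μ p.1 * pathWt μ p.2 ≤ (2 * mass μ) ^ s * (2 * mass μ) ^ t := by
    intro p _
    have := mass_nonneg μ
    apply mul_le_mul (pathWt_le μ p.1) (pathWt_le μ p.2) (pathWt_nonneg _ _) (by positivity)
  calc betaStar μ s t vs vt ≤
      (univ.filter (fun p : (Fin (s + 1) → Fin n) × (Fin (t + 1) → Fin n) =>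
        Function.Injective (Sum.elim p.1 p.2) ∧ p.1 0 = vs ∧ p.2 0 = vt)).card •
        ((2 * mass μ) ^ s * (2 * mass μ) ^ t) := Finset.sum_le_card_nsmul _ _ _ hb
    _ ≤ _ := by
        rw [nsmul_eq_mul]
        have := mass_nonneg μ
        apply mul_le_mul_of_nonneg_right _ (by positivity)
        exact_mod_cast Nat.cast_le.mpr (le_trans (Finset.card_filter_le _ _) (le_of_eq (by exact Finset.card_univ.symm)))

lemma bddAbove_betaSet (w : ℝ) (n s t : ℕ) :
    BddAbove {r : ℝ | ∃ μ : EdgeMeasure n, mass μ = w ∧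
      ∃ h : 0 < n, r = betaStar μ s t ⟨n - 1, by omega⟩ ⟨0, h⟩} := by
  refine ⟨(Fintype.card ((Fin (s+1) → Fin n) × (Fin (t+1) → Fin n))) *
        ((2 * w) ^ s * (2 * w) ^ t), ?_⟩
  rintro r ⟨μ, hm, hpos, rfl⟩
  have := betaStar_le_bound μ s t ⟨n - 1, by omega⟩ ⟨0, hpos⟩
  rwa [hm] at this

lemma betaStarSupN_nonneg (w : ℝ) (n s t : ℕ) : 0 ≤ betaStarSupN w n s t := by
  apply Real.sSup_nonneg
  rintro r ⟨μ, hm, hpos, rfl⟩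
  exact betaStar_nonneg _ _ _ _ _

lemma le_betaStarSupN {n : ℕ} (μ : EdgeMeasure n) (s t : ℕ) (h : 0 < n) :
    betaStar μ s t ⟨n - 1, by omega⟩ ⟨0, h⟩ ≤ betaStarSupN (mass μ) n s t :=
  le_csSup (bddAbove_betaSet _ n s t) ⟨μ, rfl, h, rfl⟩

lemma eq_zero_of_mass_zero {n : ℕ} (μ : EdgeMeasure n) (h : mass μ = 0) (i j : Fin n) :
    μ.w i j = 0 := by
  have h2 := edge_le_two_mass μ i j
  have := μ.nonneg i j
  rw [h] at h2; linarith

noncomputable def EdgeMeasure.smul {n : ℕ} (c : ℝ) (hc : 0 ≤ c) (μ : EdgeMeasure n) :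
    EdgeMeasure n where
  w i j := c * μ.w i j
  symm i j := by rw [μ.symm]
  diag i := by rw [μ.diag, mul_zero]
  nonneg i j := mul_nonneg hc (μ.nonneg i j)

lemma mass_smul {n : ℕ} (c : ℝ) (hc : 0 ≤ c) (μ : EdgeMeasure n) :
    mass (EdgeMeasure.smul c hc μ) = c * mass μ := by
  unfold mass EdgeMeasure.smul
  simp [← Finset.mul_sum, mul_div_assoc]

lemma pathWt_smul {n m : ℕ} (c : ℝ) (hc : 0 ≤ c) (μ : EdgeMeasure n) (x : Fin m → Fin n) :
    pathWt (EdgeMeasure.smul c hc μ) x = c ^ (m - 1) * pathWt μ x := by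
  unfold pathWt EdgeMeasure.smul
  rw [Finset.prod_mul_distrib]
  simp

lemma betaStar_smul {n : ℕ} (c : ℝ) (hc : 0 ≤ c) (μ : EdgeMeasure n) (s t : ℕ)
    (vs vt : Fin n) :
    betaStar (EdgeMeasure.smul c hc μ) s t vs vt = c ^ (s + t) * betaStar μ s t vs vt := by
  unfold betaStar
  rw [Finset.mul_sum]
  apply Finset.sum_congr rfl
  intro p _
  rw [pathWt_smul, pathWt_smul]
  simp only [Nat.add_sub_cancel, pow_add]
  ring

/-- a measure of mass `y` on `K_m`, `m ≥ 2`. -/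
noncomputable def pairMeasure (m : ℕ) (hm : 2 ≤ m) (y : ℝ) (hy : 0 ≤ y) : EdgeMeasure m where
  w i j := (if i = (⟨0, by omega⟩ : Fin m) ∧ j = ⟨1, by omega⟩ then y else 0) +
    (if i = (⟨1, by omega⟩ : Fin m) ∧ j = ⟨0, by omega⟩ then y else 0)
  symm i j := by
    rw [add_comm]
    congr 1 <;> { apply if_congr _ rfl rfl; tauto }
  diag i := by
    have : ¬ (i = (⟨0, by omega⟩ : Fin m) ∧ i = ⟨1, by omega⟩) := by
      rintro ⟨rfl, h⟩; exact absurd (congrArg Fin.val h) (by simp)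
    have h2 : ¬ (i = (⟨1, by omega⟩ : Fin m) ∧ i = ⟨0, by omega⟩) := by
      rintro ⟨rfl, h⟩; exact absurd (congrArg Fin.val h) (by simp)
    simp [this, h2]
  nonneg i j := by positivity

lemma mass_pairMeasure (m : ℕ) (hm : 2 ≤ m) (y : ℝ) (hy : 0 ≤ y) :
    mass (pairMeasure m hm y hy) = y := by
  unfold mass pairMeasure
  simp only [Finset.sum_add_distrib]
  have key : ∀ a b : Fin m, (∑ i, ∑ j, if i = a ∧ j = b then y else 0) = y := by
    intro a b
    have : ∀ i : Fin m, (∑ j, if i = a ∧ j = b then y else 0) = if i = a then y else 0 := by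
      intro i
      by_cases h : i = a <;> simp [h]
    simp [this]
  rw [key, key]
  ring

lemma sSup_mul_pos (c : ℝ) (hc : 0 < c) (S : Set ℝ) (hS : ∀ x ∈ S, 0 ≤ x)
    (hbdd : BddAbove S) : sSup ((fun x => c * x) '' S) = c * sSup S := by
  rcases S.eq_empty_or_nonempty with rfl | hne
  · simp [Real.sSup_empty]
  have hs0 : 0 ≤ sSup S := Real.sSup_nonneg fun x hx => hS x hx
  have hbddi : BddAbove ((fun x => c * x) '' S) := by
    obtain ⟨B, hB⟩ := hbdd
    exact ⟨c * B, by rintro r ⟨x, hx, rfl⟩; exact mul_le_mul_of_nonneg_left (hB hx) hc.le⟩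
  have hi0 : 0 ≤ sSup ((fun x => c * x) '' S) := by
    apply Real.sSup_nonneg
    rintro r ⟨x, hx, rfl⟩; exact mul_nonneg hc.le (hS x hx)
  apply le_antisymm
  · apply Real.sSup_le _ (mul_nonneg hc.le hs0)
    rintro r ⟨x, hx, rfl⟩
    exact mul_le_mul_of_nonneg_left (le_csSup hbdd hx) hc.le
  · rw [mul_comm, ← le_div_iff₀ hc]
    apply Real.sSup_le _ (by positivity)
    intro x hx
    rw [le_div_iff₀ hc, mul_comm]
    exact le_csSup hbddi ⟨x, hx, rfl⟩

lemma betaStar_small {n : ℕ} (μ : EdgeMeasure n) (s t : ℕ) (vs vt : Fin n)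
    (h : n < s + t + 2) : betaStar μ s t vs vt = 0 := by
  unfold betaStar
  rw [Finset.filter_false_of_mem, Finset.sum_empty]
  rintro p _ ⟨hinj, -, -⟩
  have := Fintype.card_le_of_injective _ hinj
  simp [Fintype.card_sum] at this
  omega

lemma betaStarSupN_small (w : ℝ) (n s t : ℕ) (h : n < s + t + 2) :
    betaStarSupN w n s t ≤ 0 := by
  apply Real.sSup_le _ le_rfl
  rintro r ⟨μ, hm, hpos, rfl⟩
  exact le_of_eq (betaStar_small μ s t _ _ h)

lemma betaStar_zero_zero {n : ℕ} (μ : EdgeMeasure n) (vs vt : Fin n) (h : vs ≠ vt) :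
    betaStar μ 0 0 vs vt = 1 := by
  unfold betaStar
  have : (univ.filter (fun p : (Fin 1 → Fin n) × (Fin 1 → Fin n) =>
      Function.Injective (Sum.elim p.1 p.2) ∧ p.1 0 = vs ∧ p.2 0 = vt)) =
      {((fun _ => vs), (fun _ => vt))} := by
    ext p
    simp only [mem_filter, mem_univ, true_and, mem_singleton]
    constructor
    · rintro ⟨hinj, h1, h2⟩
      have e1 : p.1 = fun _ => vs := funext fun i => by rw [Subsingleton.elim i 0]; exact h1
      have e2 : p.2 = fun _ => vt := funext fun i => by rw [Subsingleton.elim i 0]; exact h2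
      exact Prod.ext e1 e2
    · rintro rfl
      refine ⟨?_, rfl, rfl⟩
      intro a b hab
      match a, b with
      | Sum.inl a, Sum.inl b => rw [Subsingleton.elim a b]
      | Sum.inr a, Sum.inr b => rw [Subsingleton.elim a b]
      | Sum.inl a, Sum.inr b => exact absurd hab h
      | Sum.inr a, Sum.inl b => exact absurd hab.symm h
  rw [this, Finset.sum_singleton]
  unfold pathWt
  simp

lemma betaStarSupN_zero_zero (m : ℕ) (hm : 2 ≤ m) (y : ℝ) (hy : 0 ≤ y) :
    betaStarSupN y m 0 0 = 1 := by
  have hset : {r : ℝ | ∃ μ : EdgeMeasure m, mass μ = y ∧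
      ∃ h : 0 < m, r = betaStar μ 0 0 ⟨m - 1, by omega⟩ ⟨0, h⟩} = {1} := by
    ext r
    simp only [Set.mem_setOf_eq, Set.mem_singleton_iff]
    constructor
    · rintro ⟨μ, hmass, hpos, rfl⟩
      exact betaStar_zero_zero μ _ _ (by
        intro hcontra
        have := congrArg Fin.val hcontra
        simp at this
        omega)
    · rintro rfl
      exact ⟨pairMeasure m hm y hy, mass_pairMeasure m hm y hy, by omega,
        (betaStar_zero_zero _ _ _ (by
          intro hcontra
          have := congrArg Fin.val hcontra
          simp at this
          omega)).symm⟩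
  unfold betaStarSupN
  rw [hset, csSup_singleton]

lemma pathWt_zero_measure {n m : ℕ} (μ : EdgeMeasure n) (hw : ∀ i j, μ.w i j = 0)
    (hm : 0 < m - 1) (x : Fin m → Fin n) : pathWt μ x = 0 := by
  unfold pathWt
  exact Finset.prod_eq_zero (mem_univ (⟨0, hm⟩ : Fin (m-1))) (hw _ _)

lemma betaStar_zero_measure {n : ℕ} (μ : EdgeMeasure n) (hw : ∀ i j, μ.w i j = 0)
    (s t : ℕ) (hst : 0 < s + t) (vs vt : Fin n) : betaStar μ s t vs vt = 0 := by
  unfold betaStar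
  apply Finset.sum_eq_zero
  intro p _
  rcases Nat.lt_or_ge 0 s with hs | hs
  · rw [pathWt_zero_measure μ hw (by omega : 0 < s + 1 - 1), zero_mul]
  · rw [pathWt_zero_measure μ hw (by omega : 0 < t + 1 - 1), mul_zero]

lemma betaStarSupN_scale (m s t : ℕ) (hm : 2 ≤ m) (y : ℝ) (hy : 0 ≤ y) :
    betaStarSupN y m s t = y ^ (s + t) * betaStarSupN 1 m s t := by
  rcases Nat.eq_zero_or_pos (s + t) with hst | hst
  · obtain ⟨hs, ht⟩ : s = 0 ∧ t = 0 := by omega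
    subst hs; subst ht
    rw [betaStarSupN_zero_zero m hm y hy, betaStarSupN_zero_zero m hm 1 zero_le_one]
    simp
  rcases eq_or_lt_of_le hy with hy0 | hy0
  · -- y = 0
    have hzset : {r : ℝ | ∃ μ : EdgeMeasure m, mass μ = y ∧
        ∃ h : 0 < m, r = betaStar μ s t ⟨m - 1, by omega⟩ ⟨0, h⟩} = {0} := by
      ext r
      simp only [Set.mem_setOf_eq, Set.mem_singleton_iff]
      constructor
      · rintro ⟨μ, hmass, hpos, rfl⟩
        exact betaStar_zero_measure μ
          (fun i j => eq_zero_of_mass_zero μ (hmass.trans hy0.symm) i j) s t hst _ _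
      · rintro rfl
        refine ⟨⟨fun _ _ => 0, fun _ _ => rfl, fun _ => rfl, fun _ _ => le_rfl⟩, ?_, by omega, ?_⟩
        · unfold mass; simp [← hy0]
        · exact (betaStar_zero_measure _ (fun _ _ => rfl) s t hst _ _).symm
    unfold betaStarSupN
    rw [hzset, csSup_singleton, ← hy0, zero_pow (by omega), zero_mul]
  · -- y > 0
    have himg : {r : ℝ | ∃ μ : EdgeMeasure m, mass μ = y ∧
        ∃ h : 0 < m, r = betaStar μ s t ⟨m - 1, by omega⟩ ⟨0, h⟩} =
        (fun r => y ^ (s + t) * r) '' {r : ℝ | ∃ μ : EdgeMeasure m, mass μ = 1 ∧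
        ∃ h : 0 < m, r = betaStar μ s t ⟨m - 1, by omega⟩ ⟨0, h⟩} := by
      ext r
      simp only [Set.mem_setOf_eq, Set.mem_image]
      constructor
      · rintro ⟨μ, hmass, hpos, rfl⟩
        have hyinv : (0:ℝ) ≤ 1 / y := by positivity
        refine ⟨betaStar (EdgeMeasure.smul (1/y) hyinv μ) s t ⟨m - 1, by omega⟩ ⟨0, hpos⟩,
          ⟨EdgeMeasure.smul (1/y) hyinv μ, ?_, hpos, rfl⟩, ?_⟩
        · rw [mass_smul, hmass]; field_simp
        · rw [betaStar_smul]
          rw [← mul_assoc, ← mul_pow]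
          rw [mul_one_div_cancel hy0.ne', one_pow, one_mul]
      · rintro ⟨r', ⟨ν, hν, hpos, rfl⟩, rfl⟩
        refine ⟨EdgeMeasure.smul y hy ν, by rw [mass_smul, hν, mul_one], hpos, ?_⟩
        rw [betaStar_smul]
    unfold betaStarSupN
    rw [himg]
    apply sSup_mul_pos _ (by positivity)
    · rintro r ⟨μ, hmass, hpos, rfl⟩
      exact betaStar_nonneg _ _ _ _ _
    · exact bddAbove_betaSet 1 m s t

section Emb
variable {n : ℕ}

noncomputable def emb (hn : 2 ≤ n) (u : Fin n) : Fin (n-1) → Fin n :=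
  fun i => Equiv.swap u ⟨n-2, by omega⟩ ⟨i.1, by omega⟩

lemma emb_lt (hn : 2 ≤ n) (u : Fin n) (hu : u.1 < n - 1) (i : Fin (n-1)) :
    (emb hn u i).1 < n - 1 := by
  unfold emb
  rcases eq_or_ne (⟨i.1, by omega⟩ : Fin n) u with h | h
  · rw [h, Equiv.swap_apply_left]; show n - 2 < n - 1; omega
  rcases eq_or_ne (⟨i.1, by omega⟩ : Fin n) ⟨n-2, by omega⟩ with h2 | h2
  · rw [h2, Equiv.swap_apply_right]; exact hu
  · rw [Equiv.swap_apply_of_ne_of_ne h h2]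
    exact i.2

lemma emb_inj (hn : 2 ≤ n) (u : Fin n) : Function.Injective (emb hn u) := by
  intro i j h
  have h2 := (Equiv.swap u (⟨n-2, by omega⟩ : Fin n)).injective h
  have := congrArg Fin.val h2
  exact Fin.ext this

lemma emb_top' (hn : 2 ≤ n) (u : Fin n) :
    emb hn u ⟨n-2, by omega⟩ = u := by
  unfold emb
  have : (⟨(⟨n-2, by omega⟩ : Fin (n-1)).1, by omega⟩ : Fin n) = ⟨n-2, by omega⟩ := rfl
  rw [this, Equiv.swap_apply_right]

lemma emb_zero (hn : 3 ≤ n) (u : Fin n) (hu : u ≠ ⟨0, by omega⟩) :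
    emb (by omega) u ⟨0, by omega⟩ = ⟨0, by omega⟩ := by
  unfold emb
  apply Equiv.swap_apply_of_ne_of_ne (Ne.symm hu)
  intro h
  have := congrArg Fin.val h
  simp at this
  omega

noncomputable def embInv (hn : 2 ≤ n) (u : Fin n) : Fin n → Fin (n-1) :=
  fun a => ⟨min ((Equiv.swap u ⟨n-2, by omega⟩ a).1) (n-2), by omega⟩

lemma embInv_emb (hn : 2 ≤ n) (u : Fin n) (i : Fin (n-1)) :
    embInv hn u (emb hn u i) = i := by
  apply Fin.ext
  unfold embInv emb
  simp only [Equiv.swap_apply_self]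
  have := i.2
  simp
  omega

lemma emb_embInv (hn : 2 ≤ n) (u : Fin n) (hu : u.1 < n - 1) (a : Fin n) (ha : a.1 < n - 1) :
    emb hn u (embInv hn u a) = a := by
  unfold embInv emb
  have hval : ((Equiv.swap u ⟨n-2, by omega⟩ a).1) < n - 1 := by
    rcases eq_or_ne a u with h | h
    · rw [h, Equiv.swap_apply_left]; show n - 2 < n - 1; omega
    rcases eq_or_ne a (⟨n-2, by omega⟩ : Fin n) with h2 | h2
    · rw [h2, Equiv.swap_apply_right]; exact hu
    · rw [Equiv.swap_apply_of_ne_of_ne h h2]; exact ha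
  have : (⟨min ((Equiv.swap u ⟨n-2, by omega⟩ a).1) (n-2) , by omega⟩ : Fin n)
      = Equiv.swap u ⟨n-2, by omega⟩ a := by
    apply Fin.ext; simp only [Fin.val_mk]; omega
  rw [this, Equiv.swap_apply_self]

noncomputable def res (hn : 2 ≤ n) (μ : EdgeMeasure n) (u : Fin n) : EdgeMeasure (n-1) where
  w i j := μ.w (emb hn u i) (emb hn u j)
  symm i j := by rw [μ.symm]
  diag i := by rw [μ.diag]
  nonneg i j := μ.nonneg _ _

lemma emb_image (hn : 2 ≤ n) (u : Fin n) (hu : u.1 < n - 1) :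
    (univ : Finset (Fin (n-1))).image (emb hn u) =
      univ.erase (⟨n-1, by omega⟩ : Fin n) := by
  apply Finset.eq_of_subset_of_card_le
  · intro a ha
    simp only [Finset.mem_image] at ha
    obtain ⟨i, -, rfl⟩ := ha
    rw [Finset.mem_erase]
    refine ⟨?_, mem_univ _⟩
    intro h
    have h1 := emb_lt hn u hu i
    rw [h] at h1
    simp only [Fin.val_mk] at h1
    omega
  · rw [Finset.card_erase_of_mem (mem_univ _), Finset.card_image_of_injective _ (emb_inj hn u)]
    simp

lemma sum_emb (hn : 2 ≤ n) (u : Fin n) (hu : u.1 < n - 1) (f : Fin n → ℝ) :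
    ∑ i : Fin (n-1), f (emb hn u i) = ∑ a ∈ univ.erase (⟨n-1, by omega⟩ : Fin n), f a := by
  rw [← emb_image hn u hu, Finset.sum_image (fun x _ y _ h => emb_inj hn u h)]

lemma mass_res (hn : 2 ≤ n) (μ : EdgeMeasure n) (u : Fin n) (hu : u.1 < n - 1) :
    mass (res hn μ u) = mass μ - mubar μ ⟨n-1, by omega⟩ := by
  classical
  set top : Fin n := ⟨n-1, by omega⟩ with htop
  have key : ∑ i : Fin (n-1), ∑ j : Fin (n-1), μ.w (emb hn u i) (emb hn u j) =
      ∑ a ∈ univ.erase top, ∑ b ∈ univ.erase top, μ.w a b :=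
    calc ∑ i : Fin (n-1), ∑ j : Fin (n-1), μ.w (emb hn u i) (emb hn u j)
        = ∑ i : Fin (n-1), ∑ b ∈ univ.erase top, μ.w (emb hn u i) b :=
          Finset.sum_congr rfl (fun i _ => sum_emb hn u hu _)
      _ = ∑ a ∈ univ.erase top, ∑ b ∈ univ.erase top, μ.w a b :=
          sum_emb hn u hu (fun a => ∑ b ∈ univ.erase top, μ.w a b)
  have split1 : ∑ a : Fin n, ∑ b : Fin n, μ.w a b =
      (∑ a ∈ univ.erase top, ∑ b : Fin n, μ.w a b) + mubar μ top :=
    (Finset.sum_erase_add univ (fun a => ∑ b : Fin n, μ.w a b) (mem_univ top)).symm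
  have split2 : ∀ a : Fin n, ∑ b : Fin n, μ.w a b =
      (∑ b ∈ univ.erase top, μ.w a b) + μ.w a top := fun a =>
    (Finset.sum_erase_add univ (fun b => μ.w a b) (mem_univ top)).symm
  have split3 : ∑ a ∈ univ.erase top, μ.w a top = mubar μ top := by
    calc ∑ a ∈ univ.erase top, μ.w a top = ∑ a ∈ univ.erase top, μ.w top a :=
          Finset.sum_congr rfl (fun a _ => μ.symm a top)
      _ = mubar μ top := by
          have h := Finset.sum_erase_add univ (fun a => μ.w top a) (mem_univ top)
          simp only [μ.diag, add_zero] at h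
          exact h
  have main : ∑ a ∈ univ.erase top, ∑ b ∈ univ.erase top, μ.w a b =
      (∑ a : Fin n, ∑ b : Fin n, μ.w a b) - 2 * mubar μ top := by
    have e : ∑ a ∈ univ.erase top, ∑ b : Fin n, μ.w a b =
        (∑ a ∈ univ.erase top, ∑ b ∈ univ.erase top, μ.w a b) + mubar μ top := by
      rw [Finset.sum_congr rfl (fun a _ => split2 a), Finset.sum_add_distrib, split3]
    rw [split1, e]; ring
  show (∑ i : Fin (n-1), ∑ j : Fin (n-1), μ.w (emb hn u i) (emb hn u j)) / 2 = _
  rw [key, main]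
  unfold mass
  ring

end Emb

lemma pathWt_succ {n m : ℕ} (μ : EdgeMeasure n) (x : Fin (m+2) → Fin n) :
    pathWt μ x = μ.w (x 0) (x 1) * pathWt μ (x ∘ Fin.succ) := by
  show (∏ i : Fin (m+1),
      μ.w (x ⟨i.1, by have := i.2; omega⟩) (x ⟨i.1 + 1, by have := i.2; omega⟩)) = _
  rw [Fin.prod_univ_succ]
  congr 1

section StepLemmas
variable {n s t : ℕ}

lemma sum_erase_mubar (μ : EdgeMeasure n) (v : Fin n) :
    ∑ u ∈ univ.erase v, μ.w v u = mubar μ v := by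
  have h := Finset.sum_erase_add univ (fun a => μ.w v a) (mem_univ v)
  simp only [μ.diag, add_zero] at h
  exact h

lemma mubar_nonneg (μ : EdgeMeasure n) (v : Fin n) : 0 ≤ mubar μ v :=
  Finset.sum_nonneg fun _ _ => μ.nonneg _ _

lemma mubar_le_mass (μ : EdgeMeasure n) (v : Fin n) : mubar μ v ≤ mass μ := by
  have key : ∑ a ∈ univ.erase v, μ.w a v = mubar μ v := by
    calc ∑ a ∈ univ.erase v, μ.w a v = ∑ a ∈ univ.erase v, μ.w v a :=
          Finset.sum_congr rfl (fun a _ => μ.symm a v)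
      _ = mubar μ v := sum_erase_mubar μ v
  have h1 : ∑ a : Fin n, ∑ b : Fin n, μ.w a b =
      (∑ a ∈ univ.erase v, ∑ b : Fin n, μ.w a b) + ∑ b : Fin n, μ.w v b :=
    (Finset.sum_erase_add univ (fun a => ∑ b : Fin n, μ.w a b) (mem_univ v)).symm
  have h2 : ∑ a ∈ univ.erase v, μ.w a v ≤ ∑ a ∈ univ.erase v, ∑ b : Fin n, μ.w a b :=
    Finset.sum_le_sum fun a _ =>
      Finset.single_le_sum (fun b _ => μ.nonneg a b) (mem_univ v)
  have hb : mubar μ v = ∑ b : Fin n, μ.w v b := rfl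
  have hm : mass μ = (∑ a : Fin n, ∑ b : Fin n, μ.w a b) / 2 := rfl
  rw [key] at h2
  rw [hm]
  linarith

variable (p : (Fin (s+1+1) → Fin n) × (Fin (t+1) → Fin n))

lemma p1_inj (hinj : Function.Injective (Sum.elim p.1 p.2)) : Function.Injective p.1 :=
  fun a b h => Sum.inl_injective
    (hinj (show Sum.elim p.1 p.2 (Sum.inl a) = Sum.elim p.1 p.2 (Sum.inl b) by simpa using h))

lemma v1_lt (hn : 3 ≤ n) (hinj : Function.Injective (Sum.elim p.1 p.2))
    (h10 : p.1 0 = ⟨n-1, by omega⟩) (i : Fin (s+1)) : (p.1 i.succ).1 < n - 1 := by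
  have h1 : p.1 i.succ ≠ p.1 0 := fun h => Fin.succ_ne_zero i (p1_inj p hinj h)
  rw [h10] at h1
  have h2 := (p.1 i.succ).2
  by_contra hc
  push_neg at hc
  exact h1 (Fin.ext (by simp only [Fin.val_mk]; omega))

lemma u_lt (hn : 3 ≤ n) (hinj : Function.Injective (Sum.elim p.1 p.2))
    (h10 : p.1 0 = ⟨n-1, by omega⟩) : (p.1 1).1 < n - 1 := by
  have := v1_lt p hn hinj h10 0
  rwa [Fin.succ_zero_eq_one] at this

lemma v2_lt (hn : 3 ≤ n) (hinj : Function.Injective (Sum.elim p.1 p.2))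
    (h10 : p.1 0 = ⟨n-1, by omega⟩) (j : Fin (t+1)) : (p.2 j).1 < n - 1 := by
  have h1 : p.2 j ≠ p.1 0 := fun h => by
    have h2 : Sum.elim p.1 p.2 (Sum.inr j) = Sum.elim p.1 p.2 (Sum.inl 0) := by simpa using h
    cases hinj h2
  rw [h10] at h1
  have h2 := (p.2 j).2
  by_contra hc
  push_neg at hc
  exact h1 (Fin.ext (by simp only [Fin.val_mk]; omega))

lemma u_ne_v0 (hn : 3 ≤ n) (hinj : Function.Injective (Sum.elim p.1 p.2))
    (h20 : p.2 0 = ⟨0, by omega⟩) : p.1 1 ≠ ⟨0, by omega⟩ := fun h => by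
  have h2 : Sum.elim p.1 p.2 (Sum.inl 1) = Sum.elim p.1 p.2 (Sum.inr 0) := by
    simp only [Sum.elim_inl, Sum.elim_inr]; rw [h, h20]
  cases hinj h2

end StepLemmas

noncomputable def Gfun (n s t : ℕ) (hn2 : 2 ≤ n) (μ : EdgeMeasure n) :
    Fin n × ((Fin (s+1) → Fin (n-1)) × (Fin (t+1) → Fin (n-1))) → ℝ :=
  fun y => μ.w ⟨n-1, by omega⟩ y.1 *
    (pathWt (res hn2 μ y.1) y.2.1 * pathWt (res hn2 μ y.1) y.2.2)

noncomputable def Phi (n s t : ℕ) (hn2 : 2 ≤ n) :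
    ((Fin (s+1+1) → Fin n) × (Fin (t+1) → Fin n)) →
      Fin n × ((Fin (s+1) → Fin (n-1)) × (Fin (t+1) → Fin (n-1))) :=
  fun p => (p.1 1, (fun i => embInv hn2 (p.1 1) (p.1 i.succ),
                    fun j => embInv hn2 (p.1 1) (p.2 j)))

lemma step (n : ℕ) (hn : 3 ≤ n) (s t : ℕ) (μ : EdgeMeasure n) :
    betaStar μ (s+1) t ⟨n-1, by omega⟩ ⟨0, by omega⟩ ≤
      ∑ u ∈ univ.erase (⟨n-1, by omega⟩ : Fin n),
        μ.w ⟨n-1, by omega⟩ u *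
          betaStar (res (by omega : 2 ≤ n) μ u) s t ⟨n-1-1, by omega⟩ ⟨0, by omega⟩ := by
  classical
  have hn2 : 2 ≤ n := by omega
  set S : Finset ((Fin (s+1+1) → Fin n) × (Fin (t+1) → Fin n)) :=
    univ.filter (fun p => Function.Injective (Sum.elim p.1 p.2) ∧
      p.1 0 = ⟨n-1, by omega⟩ ∧ p.2 0 = ⟨0, by omega⟩) with hSdef
  set T : Finset ((Fin (s+1) → Fin (n-1)) × (Fin (t+1) → Fin (n-1))) :=
    univ.filter (fun q => Function.Injective (Sum.elim q.1 q.2) ∧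
      q.1 0 = ⟨n-1-1, by omega⟩ ∧ q.2 0 = ⟨0, by omega⟩) with hTdef
  -- value equality
  have hval : ∀ p ∈ S, pathWt μ p.1 * pathWt μ p.2 = Gfun n s t hn2 μ (Phi n s t hn2 p) := by
    intro p hp
    rw [hSdef, mem_filter] at hp
    obtain ⟨-, hinj, h10, h20⟩ := hp
    have hult := u_lt p hn hinj h10
    have hcomp1 : ∀ i : Fin (s+1),
        emb hn2 (p.1 1) (embInv hn2 (p.1 1) (p.1 i.succ)) = p.1 i.succ :=
      fun i => emb_embInv hn2 _ hult _ (v1_lt p hn hinj h10 i)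
    have hcomp2 : ∀ j : Fin (t+1),
        emb hn2 (p.1 1) (embInv hn2 (p.1 1) (p.2 j)) = p.2 j :=
      fun j => emb_embInv hn2 _ hult _ (v2_lt p hn hinj h10 j)
    have e1 : pathWt (res hn2 μ (p.1 1)) (fun i => embInv hn2 (p.1 1) (p.1 i.succ)) =
        pathWt μ (p.1 ∘ Fin.succ) := by
      apply Finset.prod_congr rfl
      intro i _
      show μ.w (emb hn2 (p.1 1) (embInv hn2 (p.1 1) (p.1 _))) _ = _
      rw [hcomp1, hcomp1]
      rfl
    have e2 : pathWt (res hn2 μ (p.1 1)) (fun j => embInv hn2 (p.1 1) (p.2 j)) =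
        pathWt μ p.2 := by
      apply Finset.prod_congr rfl
      intro j _
      show μ.w (emb hn2 (p.1 1) (embInv hn2 (p.1 1) (p.2 _))) _ = _
      rw [hcomp2, hcomp2]
    have e3 : pathWt μ p.1 = μ.w ⟨n-1, by omega⟩ (p.1 1) * pathWt μ (p.1 ∘ Fin.succ) := by
      rw [pathWt_succ μ p.1, h10]
    show pathWt μ p.1 * pathWt μ p.2 =
      μ.w ⟨n-1, by omega⟩ (p.1 1) *
        (pathWt (res hn2 μ (p.1 1)) (fun i => embInv hn2 (p.1 1) (p.1 i.succ)) *
         pathWt (res hn2 μ (p.1 1)) (fun j => embInv hn2 (p.1 1) (p.2 j)))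
    rw [e1, e2, e3]
    ring
  -- membership
  have hmem : ∀ p ∈ S, Phi n s t hn2 p ∈ (univ.erase (⟨n-1, by omega⟩ : Fin n)) ×ˢ T := by
    intro p hp
    rw [hSdef, mem_filter] at hp
    obtain ⟨-, hinj, h10, h20⟩ := hp
    have hult := u_lt p hn hinj h10
    have hcomp1 : ∀ i : Fin (s+1),
        emb hn2 (p.1 1) (embInv hn2 (p.1 1) (p.1 i.succ)) = p.1 i.succ :=
      fun i => emb_embInv hn2 _ hult _ (v1_lt p hn hinj h10 i)
    have hcomp2 : ∀ j : Fin (t+1),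
        emb hn2 (p.1 1) (embInv hn2 (p.1 1) (p.2 j)) = p.2 j :=
      fun j => emb_embInv hn2 _ hult _ (v2_lt p hn hinj h10 j)
    rw [Finset.mem_product]
    constructor
    · rw [Finset.mem_erase]
      refine ⟨?_, mem_univ _⟩
      intro h
      have h2 := congrArg Fin.val h
      simp only [Fin.val_mk] at h2
      have : (Phi n s t hn2 p).1 = p.1 1 := rfl
      rw [this] at h2
      omega
    · rw [hTdef, mem_filter]
      refine ⟨mem_univ _, ?_, ?_, ?_⟩
      · -- injectivity
        have hP : Function.Injective
            (Sum.elim (fun i : Fin (s+1) => p.1 i.succ) (p.2 : Fin (t+1) → Fin n)) := by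
          intro a b h
          have h2 : Sum.elim p.1 p.2 (Sum.map Fin.succ id a) =
              Sum.elim p.1 p.2 (Sum.map Fin.succ id b) := by
            cases a <;> cases b <;> simpa using h
          have h3 := hinj h2
          exact (Function.Injective.sumMap (Fin.succ_injective _) (fun x y h => h)) h3
        intro a b hab
        apply hP
        have key : ∀ c : Fin (s+1) ⊕ Fin (t+1),
            emb hn2 (p.1 1) (Sum.elim (fun i => embInv hn2 (p.1 1) (p.1 i.succ))
              (fun j => embInv hn2 (p.1 1) (p.2 j)) c) =
            Sum.elim (fun i : Fin (s+1) => p.1 i.succ) p.2 c := by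
          intro c
          cases c with
          | inl i => simpa using hcomp1 i
          | inr j => simpa using hcomp2 j
        rw [← key a, ← key b]
        exact congrArg _ hab
      · -- q1 0
        show embInv hn2 (p.1 1) (p.1 (0 : Fin (s+1)).succ) = ⟨n-1-1, by omega⟩
        rw [Fin.succ_zero_eq_one]
        have h1 : p.1 1 = emb hn2 (p.1 1) ⟨n-2, by omega⟩ := (emb_top' hn2 (p.1 1)).symm
        calc embInv hn2 (p.1 1) (p.1 1)
            = embInv hn2 (p.1 1) (emb hn2 (p.1 1) ⟨n-2, by omega⟩) := by rw [← h1]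
          _ = ⟨n-2, by omega⟩ := embInv_emb hn2 _ _
          _ = ⟨n-1-1, by omega⟩ := Fin.ext (by simp only [Fin.val_mk]; omega)
      · -- q2 0
        show embInv hn2 (p.1 1) (p.2 0) = ⟨0, by omega⟩
        rw [h20]
        have h1 : (⟨0, by omega⟩ : Fin n) = emb hn2 (p.1 1) ⟨0, by omega⟩ :=
          (emb_zero hn (p.1 1) (u_ne_v0 p hn hinj h20)).symm
        rw [h1]
        exact embInv_emb hn2 _ _
  -- injectivity of Phi on S
  have hPinj : ∀ p ∈ S, ∀ p' ∈ S, Phi n s t hn2 p = Phi n s t hn2 p' → p = p' := by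
    intro p hp p' hp' h
    rw [hSdef, mem_filter] at hp hp'
    obtain ⟨-, hinj, h10, h20⟩ := hp
    obtain ⟨-, hinj', h10', h20'⟩ := hp'
    have hu : p.1 1 = p'.1 1 := congrArg Prod.fst h
    have hq := congrArg Prod.snd h
    have hq1 : (fun i : Fin (s+1) => embInv hn2 (p.1 1) (p.1 i.succ)) =
        (fun i : Fin (s+1) => embInv hn2 (p'.1 1) (p'.1 i.succ)) := congrArg Prod.fst hq
    have hq2 : (fun j : Fin (t+1) => embInv hn2 (p.1 1) (p.2 j)) =
        (fun j : Fin (t+1) => embInv hn2 (p'.1 1) (p'.2 j)) := congrArg Prod.snd hq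
    have hult := u_lt p hn hinj h10
    have hult' := u_lt p' hn hinj' h10'
    have hp1 : p.1 = p'.1 := by
      funext i
      induction i using Fin.cases with
      | zero => rw [h10, h10']
      | succ j =>
        have e := congrFun hq1 j
        have e2 := congrArg (emb hn2 (p.1 1)) e
        rw [emb_embInv hn2 _ hult _ (v1_lt p hn hinj h10 j)] at e2
        rw [hu] at e2
        rw [emb_embInv hn2 _ hult' _ (v1_lt p' hn hinj' h10' j)] at e2
        exact e2
    have hp2 : p.2 = p'.2 := by
      funext j
      have e := congrFun hq2 j
      have e2 := congrArg (emb hn2 (p.1 1)) e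
      rw [emb_embInv hn2 _ hult _ (v2_lt p hn hinj h10 j)] at e2
      rw [hu] at e2
      rw [emb_embInv hn2 _ hult' _ (v2_lt p' hn hinj' h10' j)] at e2
      exact e2
    exact Prod.ext hp1 hp2
  -- assemble
  have hG0 : ∀ y, 0 ≤ Gfun n s t hn2 μ y := fun y =>
    mul_nonneg (μ.nonneg _ _) (mul_nonneg (pathWt_nonneg _ _) (pathWt_nonneg _ _))
  calc betaStar μ (s+1) t ⟨n-1, by omega⟩ ⟨0, by omega⟩
      = ∑ p ∈ S, pathWt μ p.1 * pathWt μ p.2 := rfl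
    _ = ∑ p ∈ S, Gfun n s t hn2 μ (Phi n s t hn2 p) := Finset.sum_congr rfl hval
    _ = ∑ y ∈ S.image (Phi n s t hn2), Gfun n s t hn2 μ y := (Finset.sum_image hPinj).symm
    _ ≤ ∑ y ∈ (univ.erase (⟨n-1, by omega⟩ : Fin n)) ×ˢ T, Gfun n s t hn2 μ y := by
        apply Finset.sum_le_sum_of_subset_of_nonneg
        · intro y hy
          rw [Finset.mem_image] at hy
          obtain ⟨p, hp, rfl⟩ := hy
          exact hmem p hp
        · intro y _ _
          exact hG0 y
    _ = ∑ u ∈ univ.erase (⟨n-1, by omega⟩ : Fin n), ∑ q ∈ T, Gfun n s t hn2 μ (u, q) := by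
        rw [Finset.sum_product]
    _ = ∑ u ∈ univ.erase (⟨n-1, by omega⟩ : Fin n),
          μ.w ⟨n-1, by omega⟩ u *
            betaStar (res (by omega : 2 ≤ n) μ u) s t ⟨n-1-1, by omega⟩ ⟨0, by omega⟩ := by
        apply Finset.sum_congr rfl
        intro u _
        show ∑ q ∈ T, μ.w ⟨n-1, by omega⟩ u *
            (pathWt (res hn2 μ u) q.1 * pathWt (res hn2 μ u) q.2) = _
        rw [← Finset.mul_sum]
        rfl

lemma aux (t : ℕ) : ∀ s n : ℕ, 0 < n → ∀ w : ℝ, 0 ≤ w →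
    ∃ ws : Fin s → ℝ, (∀ i, 0 ≤ ws i) ∧ (∑ i, ws i) ≤ w ∧
      betaStarSupN w n s t ≤
        betaStarSupN (w - ∑ i, ws i) (n - s) 0 t * ∏ i, ws i := by
  intro s
  induction s with
  | zero =>
    intro n hn w hw
    refine ⟨fun _ => 0, fun _ => le_rfl, by simpa using hw, ?_⟩
    simp
  | succ s ih =>
    intro n hn w hw
    by_cases hsmall : n < (s+1) + t + 2
    · refine ⟨fun _ => 0, fun _ => le_rfl, by simp [hw], ?_⟩
      have hL := betaStarSupN_small w n (s+1) t hsmall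
      have hprod : (∏ _i : Fin (s+1), (0:ℝ)) = 0 := by simp
      rw [hprod, mul_zero]
      exact hL
    · push_neg at hsmall
      have hn3 : 3 ≤ n := by omega
      have hn2 : 2 ≤ n := by omega
      have hm2 : 2 ≤ n - 1 := by omega
      set k := s + t with hk
      set x₀ : ℝ := w / (k + 1) with hx₀
      have hx₀0 : 0 ≤ x₀ := by positivity
      have hx₀w : x₀ ≤ w := by
        rw [hx₀]
        apply div_le_self hw
        have : (0:ℝ) ≤ (k:ℝ) := Nat.cast_nonneg k
        linarith
      have hw' : 0 ≤ w - x₀ := by linarith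
      set K := betaStarSupN 1 (n-1) s t with hK
      have hK0 : 0 ≤ K := betaStarSupN_nonneg 1 (n-1) s t
      -- per-measure bound and sup bound
      have hsup : betaStarSupN w n (s+1) t ≤ x₀ * ((w - x₀)^k * K) := by
        apply Real.sSup_le _ (mul_nonneg hx₀0 (mul_nonneg (pow_nonneg hw' k) hK0))
        rintro r ⟨μ, hmass, hpos, rfl⟩
        have hx0 : 0 ≤ mubar μ ⟨n-1, by omega⟩ := mubar_nonneg μ _
        have hxw : mubar μ ⟨n-1, by omega⟩ ≤ w := hmass ▸ mubar_le_mass μ _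
        calc betaStar μ (s+1) t ⟨n-1, by omega⟩ ⟨0, hpos⟩
            ≤ ∑ u ∈ univ.erase (⟨n-1, by omega⟩ : Fin n),
                μ.w ⟨n-1, by omega⟩ u *
                  betaStar (res (by omega : 2 ≤ n) μ u) s t ⟨n-1-1, by omega⟩ ⟨0, by omega⟩ :=
              step n hn3 s t μ
          _ ≤ ∑ u ∈ univ.erase (⟨n-1, by omega⟩ : Fin n),
                μ.w ⟨n-1, by omega⟩ u * ((w - mubar μ ⟨n-1, by omega⟩)^k * K) := by
              apply Finset.sum_le_sum
              intro u hu
              apply mul_le_mul_of_nonneg_left _ (μ.nonneg _ _)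
              have hu_lt : u.1 < n - 1 := by
                rw [Finset.mem_erase] at hu
                have h2 := u.2
                rcases Nat.lt_or_ge u.1 (n-1) with h | h
                · exact h
                · exfalso
                  exact hu.1 (Fin.ext (by simp only [Fin.val_mk]; omega))
              have hle := le_betaStarSupN (res hn2 μ u) s t (by omega : 0 < n - 1)
              rw [mass_res hn2 μ u hu_lt, hmass] at hle
              rw [betaStarSupN_scale (n-1) s t hm2 (w - mubar μ ⟨n-1, by omega⟩)
                (by linarith)] at hle
              exact hle
          _ = (∑ u ∈ univ.erase (⟨n-1, by omega⟩ : Fin n), μ.w ⟨n-1, by omega⟩ u) *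
                ((w - mubar μ ⟨n-1, by omega⟩)^k * K) := by rw [← Finset.sum_mul]
          _ = mubar μ ⟨n-1, by omega⟩ * ((w - mubar μ ⟨n-1, by omega⟩)^k * K) := by
              rw [sum_erase_mubar]
          _ ≤ x₀ * ((w - x₀)^k * K) := by
              have ham := amgm k (mubar μ ⟨n-1, by omega⟩) w hx0 hxw
              have h2 := mul_le_mul_of_nonneg_right ham hK0
              calc mubar μ ⟨n-1, by omega⟩ * ((w - mubar μ ⟨n-1, by omega⟩)^k * K)
                  = mubar μ ⟨n-1, by omega⟩ * (w - mubar μ ⟨n-1, by omega⟩)^k * K := by ring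
                _ ≤ w / (k+1) * (w - w / (k+1))^k * K := h2
                _ = x₀ * ((w - x₀)^k * K) := by rw [← hx₀]; ring
      have hscale : (w - x₀)^k * K = betaStarSupN (w - x₀) (n-1) s t :=
        (betaStarSupN_scale (n-1) s t hm2 (w - x₀) hw').symm
      obtain ⟨ws', hws'0, hws's, hws'main⟩ := ih (n-1) (by omega) (w - x₀) hw'
      refine ⟨Fin.cons x₀ ws', ?_, ?_, ?_⟩
      · intro i
        induction i using Fin.cases with
        | zero => simpa using hx₀0
        | succ j => simpa using hws'0 j
      · rw [Fin.sum_cons]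
        linarith
      · rw [Fin.sum_cons, Fin.prod_cons]
        have hnn : n - (s+1) = (n-1) - s := by omega
        calc betaStarSupN w n (s+1) t ≤ x₀ * ((w - x₀)^k * K) := hsup
          _ = x₀ * betaStarSupN (w - x₀) (n-1) s t := by rw [hscale]
          _ ≤ x₀ * (betaStarSupN ((w - x₀) - ∑ i, ws' i) ((n-1) - s) 0 t * ∏ i, ws' i) :=
              mul_le_mul_of_nonneg_left hws'main hx₀0
          _ = betaStarSupN (w - (x₀ + ∑ i, ws' i)) (n - (s+1)) 0 t * (x₀ * ∏ i, ws' i) := by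
              rw [sub_sub, hnn]
              ring


/-- Claim 2.6: there are nonnegative `w_1, …, w_s` with `∑ w_i ≤ w` such that
`β*_{w,n}(P_{(s,t)}) ≤ β*_{w',n-s}(P_{(0,t)}) · ∏ w_i` where `w' = w - ∑ w_i`. -/
theorem stmt7 (s t n : ℕ) (hn : 0 < n) (w : ℝ) (hw : 0 ≤ w) :
    ∃ ws : Fin s → ℝ, (∀ i, 0 ≤ ws i) ∧ (∑ i, ws i) ≤ w ∧
      betaStarSupN w n s t ≤
        betaStarSupN (w - ∑ i, ws i) (n - s) 0 t * ∏ i, ws i := by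
  exact aux t s n hn w hw
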